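/- The square roots of β and of 3 do not lie in Q(ζ₉)⁺, i.e., there is no x ∈ Q(ζ₉)⁺ with x² = β, and no x ∈ Q(ζ₉)⁺ with x² = 3; however, 3β is a perfect square in Q(ζ₉)⁺, namely 3β = (u₁⁻¹u₂⁻¹β²)², where β = 2 - ζ₉⁴ - ζ₉⁵, u₁ = ζ₉ - ζ₉² - ζ₉⁵, u₂ = 1 - ζ₉⁴ - ζ₉⁵. -/
import Mathlib


noncomputable section

/-- `ζ₉ = exp(2πi/9)`. -/
def z9 : ℂ := Complex.exp (2 * Real.pi * Complex.I / 9)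

/-- The totally real cubic field `Q(ζ₉)⁺ = Q(2cos(π/9))`, as a subfield of `ℂ`. -/
def Kplus : IntermediateField ℚ ℂ :=
  IntermediateField.adjoin ℚ {((2 * Real.cos (Real.pi / 9) : ℝ) : ℂ)}

def u1 : ℂ := z9 - z9 ^ 2 - z9 ^ 5

def u2 : ℂ := 1 - z9 ^ 4 - z9 ^ 5

open Complex Polynomial IntermediateField

lemma z9_pow (n : ℕ) : z9 ^ n = Complex.exp ((2 * Real.pi * n / 9 : ℝ) * Complex.I) := by
  rw [z9, ← Complex.exp_nat_mul]
  congr 1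
  push_cast
  ring

lemma z9_pow' (n : ℕ) :
    z9 ^ n = ((Real.cos (2 * Real.pi * n / 9) : ℝ) : ℂ)
      + ((Real.sin (2 * Real.pi * n / 9) : ℝ) : ℂ) * Complex.I := by
  rw [z9_pow, Complex.exp_mul_I, ← Complex.ofReal_cos, ← Complex.ofReal_sin]

lemma hz9 : z9 ^ 9 = 1 := by
  rw [z9_pow]
  have : (2 * Real.pi * (9:ℕ) / 9 : ℝ) = 2 * Real.pi := by push_cast; ring
  rw [this]
  push_cast
  exact Complex.exp_two_pi_mul_I

lemma hz3 : z9 ^ 3 ≠ 1 := by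
  rw [z9_pow']
  intro h
  have him := congrArg Complex.im h
  simp only [Complex.add_im, Complex.ofReal_im, Complex.mul_im, Complex.ofReal_re,
    Complex.I_im, Complex.I_re, Complex.one_im, mul_one, mul_zero, add_zero, zero_add] at him
  have : (0:ℝ) < Real.sin (2 * Real.pi * (3:ℕ) / 9) := by
    apply Real.sin_pos_of_pos_of_lt_pi <;> push_cast <;> nlinarith [Real.pi_pos]
  linarith

lemma hz : z9 ^ 6 + z9 ^ 3 + 1 = 0 := by
  have h : (z9 ^ 3 - 1) * (z9 ^ 6 + z9 ^ 3 + 1) = 0 := by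
    linear_combination hz9
  rcases mul_eq_zero.mp h with h | h
  · exact absurd (by linear_combination h) hz3
  · exact h

lemma hcz : ((2 * Real.cos (Real.pi / 9) : ℝ) : ℂ) = -(z9 ^ 4 + z9 ^ 5) := by
  rw [z9_pow' 4, z9_pow' 5,
    show (2 * Real.pi * (4:ℕ) / 9 : ℝ) = Real.pi - Real.pi / 9 by push_cast; ring,
    show (2 * Real.pi * (5:ℕ) / 9 : ℝ) = Real.pi + Real.pi / 9 by push_cast; ring,
    Real.cos_pi_sub, Real.sin_pi_sub, Real.cos_add, Real.sin_add, Real.cos_pi, Real.sin_pi]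
  push_cast
  ring

lemma hkey : (2 - z9 ^ 4 - z9 ^ 5) ^ 3 = 3 * u1 ^ 2 * u2 ^ 2 := by
  rw [u1, u2]
  linear_combination (8 - 3*z9^2 - 2*z9^3 - 15*z9^4 - 9*z9^5 + 6*z9^6 + 3*z9^7 + 12*z9^8
    + 14*z9^9 - 3*z9^11 - 3*z9^12 - 6*z9^13 - 3*z9^14) * hz

lemma cos_pi_div_nine_pos : 0 < Real.cos (Real.pi / 9) := by
  apply Real.cos_pos_of_mem_Ioo
  constructor <;> nlinarith [Real.pi_pos]

lemma hbne : (2 - z9 ^ 4 - z9 ^ 5 : ℂ) ≠ 0 := by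
  have h : (2 - z9 ^ 4 - z9 ^ 5 : ℂ) = ((2 + 2 * Real.cos (Real.pi / 9) : ℝ) : ℂ) := by
    rw [Complex.ofReal_add, hcz, Complex.ofReal_ofNat]
    ring
  rw [h]
  rw [Complex.ofReal_ne_zero]
  nlinarith [cos_pi_div_nine_pos]

lemma hu1 : u1 ≠ 0 := by
  intro h
  apply hbne
  have h3 : (2 - z9 ^ 4 - z9 ^ 5) ^ 3 = 0 := by rw [hkey, h]; ring
  exact pow_eq_zero_iff (by norm_num) |>.mp h3

lemma hu2 : u2 ≠ 0 := by
  intro h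
  apply hbne
  have h3 : (2 - z9 ^ 4 - z9 ^ 5) ^ 3 = 0 := by rw [hkey, h]; ring
  exact pow_eq_zero_iff (by norm_num) |>.mp h3

lemma hccube : ((2 * Real.cos (Real.pi / 9) : ℝ) : ℂ) ^ 3
    - 3 * ((2 * Real.cos (Real.pi / 9) : ℝ) : ℂ) - 1 = 0 := by
  rw [hcz]
  linear_combination (-(z9^3) - 3*z9^4 - 3*z9^5 - z9^6) * hz9 - hz

lemma norat3 (r : ℚ) (h : r ^ 3 - 3 * r - 1 = 0) : False := by
  have hm : ((X : ℤ[X]) ^ 3 - 3 * X - 1).Monic := by monicity!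
  have hai : aeval r ((X : ℤ[X]) ^ 3 - 3 * X - 1) = 0 := by
    simp only [map_sub, map_pow, map_mul, aeval_X, map_ofNat, map_one]
    linear_combination h
  obtain ⟨m, hm'⟩ := isInteger_of_is_root_of_monic hm hai
  rw [eq_intCast] at hm'
  have hz : (m : ℚ) ^ 3 - 3 * m - 1 = 0 := by rw [hm']; exact h
  have hzz : m ^ 3 - 3 * m - 1 = 0 := by exact_mod_cast hz
  have hdvd : m ∣ 1 := ⟨m ^ 2 - 3, by linear_combination -hzz⟩
  rcases Int.isUnit_iff.mp (isUnit_of_dvd_one hdvd) with rfl | rfl <;> norm_num at hzz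

lemma norat2 (r : ℚ) (h : r ^ 2 = 3) : False := by
  have hm : ((X : ℤ[X]) ^ 2 - 3).Monic := by monicity!
  have hai : aeval r ((X : ℤ[X]) ^ 2 - 3) = 0 := by
    simp only [map_sub, map_pow, aeval_X, map_ofNat]
    linear_combination h
  obtain ⟨m, hm'⟩ := isInteger_of_is_root_of_monic hm hai
  rw [eq_intCast] at hm'
  have hz : (m : ℚ) ^ 2 = 3 := by rw [hm']; exact h
  have hzz : m ^ 2 = 3 := by exact_mod_cast hz
  have h1 : m ≤ 2 := by nlinarith
  have h2 : -2 ≤ m := by nlinarith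
  interval_cases m <;> omega

lemma Pdeg : ((X : ℚ[X]) ^ 3 - 3 * X - 1).natDegree = 3 := by compute_degree!

lemma Pirr : Irreducible ((X : ℚ[X]) ^ 3 - 3 * X - 1) := by
  rw [irreducible_iff_roots_eq_zero_of_degree_le_three (by rw [Pdeg]; norm_num)
    (by rw [Pdeg])]
  rw [Multiset.eq_zero_iff_forall_notMem]
  intro r hr
  rw [mem_roots', IsRoot] at hr
  apply norat3 r
  have := hr.2
  simpa using this

lemma haev : aeval ((2 * Real.cos (Real.pi / 9) : ℝ) : ℂ) ((X : ℚ[X]) ^ 3 - 3 * X - 1) = 0 := by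
  simp only [map_sub, map_pow, map_mul, aeval_X, map_ofNat, map_one]
  exact hccube

lemma hcint : IsIntegral ℚ (((2 * Real.cos (Real.pi / 9) : ℝ) : ℂ)) :=
  ⟨(X : ℚ[X]) ^ 3 - 3 * X - 1, by monicity!, haev⟩

lemma hminpoly : minpoly ℚ (((2 * Real.cos (Real.pi / 9) : ℝ) : ℂ)) = (X : ℚ[X]) ^ 3 - 3 * X - 1 :=
  (minpoly.eq_of_irreducible_of_monic Pirr haev (by monicity!)).symm

instance : FiniteDimensional ℚ Kplus := IntermediateField.adjoin.finiteDimensional hcint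

lemma finrankK : Module.finrank ℚ Kplus = 3 := by
  have h := IntermediateField.adjoin.finrank hcint
  rw [hminpoly, Pdeg] at h
  exact h

lemma nosqrt3 (x : Kplus) : x ^ 2 ≠ 3 := by
  intro hx
  have hint : IsIntegral ℚ x := IsIntegral.of_finite ℚ x
  have hdvd : minpoly ℚ x ∣ (X : ℚ[X]) ^ 2 - 3 :=
    minpoly.dvd ℚ x (by simp only [map_sub, map_pow, aeval_X, map_ofNat]; rw [hx]; ring)
  have d2 : ((X : ℚ[X]) ^ 2 - 3).natDegree = 2 := by compute_degree!
  have hne : ((X : ℚ[X]) ^ 2 - 3) ≠ 0 := by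
    intro h; rw [h] at d2; simp at d2
  have hle : (minpoly ℚ x).natDegree ≤ 2 := d2 ▸ Polynomial.natDegree_le_of_dvd hdvd hne
  have hpos := minpoly.natDegree_pos hint
  have hdvd3 : (minpoly ℚ x).natDegree ∣ 3 := finrankK ▸ minpoly.degree_dvd hint
  have h13 := (Nat.prime_three).eq_one_or_self_of_dvd _ hdvd3
  have h1 : (minpoly ℚ x).natDegree = 1 := by omega
  obtain ⟨r, hr⟩ := minpoly.natDegree_eq_one_iff.mp h1
  apply norat2 r
  have hinj := (algebraMap ℚ Kplus).injective
  apply hinj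
  rw [map_pow, hr, hx, map_ofNat]

/-- Neither `β` nor `3` is a perfect square in `Q(ζ₉)⁺`, but `3β` is:
`3β = (u₁⁻¹u₂⁻¹β²)²`. -/
theorem stmt13 (U1 U2 B : Kplus)
    (hU1 : (U1 : ℂ) = u1) (hU2 : (U2 : ℂ) = u2)
    (hB : (B : ℂ) = 2 - z9 ^ 4 - z9 ^ 5) :
    (∀ x : Kplus, x ^ 2 ≠ B) ∧ (∀ x : Kplus, x ^ 2 ≠ 3) ∧
      3 * B = (U1⁻¹ * U2⁻¹ * B ^ 2) ^ 2 := by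
  have key3 : 3 * B = (U1⁻¹ * U2⁻¹ * B ^ 2) ^ 2 := by
    apply Subtype.coe_injective
    push_cast [IntermediateField.coe_inv]
    rw [hU1, hU2, hB]
    simp only [show ((3 : Kplus) : ℂ) = (3 : ℂ) from rfl]
    field_simp [hu1, hu2]
    linear_combination -(2 - z9 ^ 4 - z9 ^ 5) * hkey
  have hBne : B ≠ 0 := by
    intro h
    apply hbne
    rw [← hB, h, ZeroMemClass.coe_zero]
  refine ⟨?_, nosqrt3, key3⟩
  intro x hx
  have hx0 : x ≠ 0 := by
    rintro rfl
    apply hBne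
    rw [← hx]
    norm_num
  apply nosqrt3 (U1⁻¹ * U2⁻¹ * B ^ 2 * x⁻¹)
  rw [mul_pow, ← key3, inv_pow, ← hx, mul_assoc, mul_inv_cancel₀ (pow_ne_zero 2 hx0), mul_one]
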